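/- The Diophantine equation x^3 - y^3 = a^4 - b^4 has infinitely many solutions in positive integers (x,y,a,b) with gcd(x,y,a,b) = 1 and such that none of x^3, y^3, a^4, b^4 equals another in a way making a partial sum vanish. -/

import Mathlib

private lemma even_pow_ne_odd_pow (x a : ℤ) (m k : ℕ) (hm : m ≠ 0)
    (hx : Even x) (ha : Odd a) : x ^ m ≠ a ^ k := by
  intro h
  have h1 : Even (x ^ m) := hx.pow_of_ne_zero hm
  have h2 : Odd (a ^ k) := ha.pow
  rw [h] at h1
  exact (Int.not_odd_iff_even.mpr h1) h2

theorem stmt_4 :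
    {q : ℤ × ℤ × ℤ × ℤ |
      0 < q.1 ∧ 0 < q.2.1 ∧ 0 < q.2.2.1 ∧ 0 < q.2.2.2 ∧
      Int.gcd q.1 (Int.gcd q.2.1 (Int.gcd q.2.2.1 q.2.2.2)) = 1 ∧
      q.1^3 + (- q.2.1^3) + (- q.2.2.1^4) + q.2.2.2^4 = 0 ∧
      q.1^3 ≠ q.2.1^3 ∧ q.2.2.1^4 ≠ q.2.2.2^4 ∧
      q.1^3 ≠ q.2.2.1^4 ∧ q.2.1^3 ≠ q.2.2.2^4}.Infinite := by
  apply Set.infinite_of_injective_forall_mem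
    (f := fun n : ℕ =>
      ((15*(2*((n:ℤ)+1))^3+33*(2*((n:ℤ)+1))^2+21*(2*((n:ℤ)+1))+4,
        15*(2*((n:ℤ)+1))^3+12*(2*((n:ℤ)+1))^2-1,
        3*(2*(2*((n:ℤ)+1))+1)^2,
        (3*(2*((n:ℤ)+1))+1)*(3*(2*((n:ℤ)+1))+2)) : ℤ × ℤ × ℤ × ℤ))
  · intro n m h
    have h1 := congrArg (fun q : ℤ × ℤ × ℤ × ℤ => q.2.2.2) h
    simp only at h1
    have hn : (0:ℤ) ≤ (n:ℤ) := Int.natCast_nonneg n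
    have hm : (0:ℤ) ≤ (m:ℤ) := Int.natCast_nonneg m
    have : (n:ℤ) = (m:ℤ) := by
      rcases lt_trichotomy ((n:ℤ)) ((m:ℤ)) with hlt | he | hlt
      · nlinarith
      · exact he
      · nlinarith
    exact_mod_cast this
  · intro n
    have hn : (0:ℤ) ≤ (n:ℤ) := Int.natCast_nonneg n
    simp only [Set.mem_setOf_eq]
    have hxe : Even (15*(2*((n:ℤ)+1))^3+33*(2*((n:ℤ)+1))^2+21*(2*((n:ℤ)+1))+4) :=
      ⟨60*((n:ℤ)+1)^3+66*((n:ℤ)+1)^2+21*((n:ℤ)+1)+2, by ring⟩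
    have hyo : Odd (15*(2*((n:ℤ)+1))^3+12*(2*((n:ℤ)+1))^2-1) :=
      ⟨60*((n:ℤ)+1)^3+24*((n:ℤ)+1)^2-1, by ring⟩
    have hao : Odd (3*(2*(2*((n:ℤ)+1))+1)^2) :=
      ⟨24*((n:ℤ)+1)^2+12*((n:ℤ)+1)+1, by ring⟩
    have hbe : Even ((3*(2*((n:ℤ)+1))+1)*(3*(2*((n:ℤ)+1))+2)) :=
      ⟨(6*((n:ℤ)+1)+1)*(3*((n:ℤ)+1)+1), by ring⟩
    refine ⟨by nlinarith, by nlinarith, by positivity, by nlinarith, ?_, by ring,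
      even_pow_ne_odd_pow _ _ 3 3 (by norm_num) hxe hyo,
      (even_pow_ne_odd_pow _ _ 4 4 (by norm_num) hbe hao).symm,
      even_pow_ne_odd_pow _ _ 3 4 (by norm_num) hxe hao,
      (even_pow_ne_odd_pow _ _ 4 3 (by norm_num) hbe hyo).symm⟩
    have hab : Int.gcd (3*(2*(2*((n:ℤ)+1))+1)^2) ((3*(2*((n:ℤ)+1))+1)*(3*(2*((n:ℤ)+1))+2)) = 1 := by
      rw [← Int.isCoprime_iff_gcd_eq_one]
      exact ⟨3, -4, by ring⟩
    rw [hab]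
    simp
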